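/- If G is a disconnected (C₄,P₄,P₃∪K₂,3K₂)-free graph, then G is an empty graph, or G consists of exactly two non-trivial complete components plus possibly isolated vertices, or G has exactly one non-trivial component (which is (C₄,P₄,P₃∪K₂,3K₂)-free) plus isolated vertices. -/
import Mathlib


open SimpleGraph

/-- A coloring of the vertices with colors `0, ..., k-1` which uses all `k` colors and such
that every pair of distinct colors appears on the endpoints of some edge. -/
def IsCompleteColoring {V : Type*} (G : SimpleGraph V) (c : V → ℕ) (k : ℕ) : Prop :=
  (∀ v, c v < k) ∧ (∀ i, i < k → ∃ v, c v = i) ∧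
    ∀ i j, i < k → j < k → i ≠ j → ∃ u w, G.Adj u w ∧ c u = i ∧ c w = j

/-- A proper coloring: adjacent vertices get distinct colors. -/
def IsProperColoring {V : Type*} (G : SimpleGraph V) (c : V → ℕ) : Prop :=
  ∀ u w, G.Adj u w → c u ≠ c w

/-- A Grundy coloring with `k` colors: proper, uses all `k` colors, and every vertex of
color `j` has, for each `i < j`, a neighbor colored `i`. -/
def IsGrundyColoring {V : Type*} (G : SimpleGraph V) (c : V → ℕ) (k : ℕ) : Prop :=
  (∀ v, c v < k) ∧ (∀ i, i < k → ∃ v, c v = i) ∧ IsProperColoring G c ∧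
    ∀ v i, i < c v → ∃ u, G.Adj u v ∧ c u = i

/-- The pseudoachromatic number `ψ`. -/
noncomputable def pseudoachromaticNumber {V : Type*} (G : SimpleGraph V) : ℕ :=
  sSup {k | ∃ c, IsCompleteColoring G c k}

/-- The achromatic number `α`. -/
noncomputable def achromaticNumber {V : Type*} (G : SimpleGraph V) : ℕ :=
  sSup {k | ∃ c, IsCompleteColoring G c k ∧ IsProperColoring G c}

/-- The Grundy number `Γ`. -/
noncomputable def grundyNumber {V : Type*} (G : SimpleGraph V) : ℕ :=
  sSup {k | ∃ c, IsGrundyColoring G c k}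

/-- The chromatic number `χ` (as a natural number). -/
noncomputable def chromNumber {V : Type*} (G : SimpleGraph V) : ℕ :=
  sInf {k | ∃ c : V → ℕ, (∀ v, c v < k) ∧ IsProperColoring G c}

/-- The clique number `ω`. -/
noncomputable def cliqueNumber {V : Type*} (G : SimpleGraph V) : ℕ :=
  sSup {n | ∃ s : Finset V, G.IsNClique n s}

/-- `G` is `H`-free: no induced subgraph of `G` is isomorphic to `H`. -/
def GraphFree {V W : Type*} (G : SimpleGraph V) (H : SimpleGraph W) : Prop :=
  ∀ s : Set V, IsEmpty ((G.induce s) ≃g H)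

/-- `G` is `ωψ`-perfect. -/
def OmegaPsiPerfect {V : Type*} (G : SimpleGraph V) : Prop :=
  ∀ s : Set V, cliqueNumber (G.induce s) = pseudoachromaticNumber (G.induce s)

/-- `G` is `χψ`-perfect. -/
def ChiPsiPerfect {V : Type*} (G : SimpleGraph V) : Prop :=
  ∀ s : Set V, chromNumber (G.induce s) = pseudoachromaticNumber (G.induce s)

/-- The path on 4 vertices. -/
def pathP4 : SimpleGraph (Fin 4) :=
  SimpleGraph.fromRel (fun a b => (b : ℕ) = (a : ℕ) + 1)

/-- The cycle on 4 vertices. -/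
def cycleC4 : SimpleGraph (Fin 4) :=
  SimpleGraph.fromRel (fun a b => b = a + 1)

/-- The disjoint union of a path on 3 vertices and an edge. -/
def graphP3K2 : SimpleGraph (Fin 5) :=
  SimpleGraph.fromRel (fun a b => (a, b) ∈ [((0 : Fin 5), (1 : Fin 5)), (1, 2), (3, 4)])

/-- The disjoint union of three edges. -/
def graph3K2 : SimpleGraph (Fin 6) :=
  SimpleGraph.fromRel (fun a b => (a, b) ∈ [((0 : Fin 6), (1 : Fin 6)), (2, 3), (4, 5)])

/-- The join of two graphs. -/
def graphJoin {V W : Type*} (G : SimpleGraph V) (H : SimpleGraph W) : SimpleGraph (V ⊕ W) :=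
  SimpleGraph.fromRel (fun x y =>
    match x, y with
    | Sum.inl a, Sum.inl b => G.Adj a b
    | Sum.inr a, Sum.inr b => H.Adj a b
    | _, _ => True)

/-- The disjoint union of two graphs. -/
def graphSum {V W : Type*} (G : SimpleGraph V) (H : SimpleGraph W) : SimpleGraph (V ⊕ W) :=
  SimpleGraph.fromRel (fun x y =>
    match x, y with
    | Sum.inl a, Sum.inl b => G.Adj a b
    | Sum.inr a, Sum.inr b => H.Adj a b
    | _, _ => False)

/-- The disjoint union of a family of graphs. -/
def graphSigma {ι : Type} {U : ι → Type} (f : ∀ i, SimpleGraph (U i)) :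
    SimpleGraph (Σ i, U i) :=
  SimpleGraph.fromRel (fun x y => ∃ h : x.1 = y.1, (f y.1).Adj (h ▸ x.2) y.2)

section Helpers
variable {V : Type*} {W : Type*} {G : SimpleGraph V} {H : SimpleGraph W}

lemma not_free_of_map (f : W → V) (hinj : Function.Injective f)
    (h : ∀ i j, G.Adj (f i) (f j) ↔ H.Adj i j) : ¬ GraphFree G H := by
  intro hfree
  refine (hfree (Set.range f)).false (SimpleGraph.Iso.symm ?_)
  refine ⟨Equiv.ofInjective f hinj, ?_⟩
  intro a b
  simp only [Equiv.ofInjective_apply, SimpleGraph.comap_adj, Function.Embedding.coe_subtype]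
  exact h a b

lemma free_induce (A : Set V) (hfree : GraphFree G H) : GraphFree (G.induce A) H := by
  intro s
  constructor
  intro e
  refine not_free_of_map (G := G) (H := H)
      (fun w => ((e.symm w : s) : A)) ?_ ?_ hfree
  · intro i j hij
    apply e.symm.injective
    exact Subtype.ext (Subtype.ext hij)
  · intro i j
    exact e.symm.map_adj_iff (v := i) (w := j)

lemma exists_induced_P3 {u v : V} (p : G.Walk u v) (hne : u ≠ v) (hna : ¬ G.Adj u v) :
    ∃ x w y, G.Adj x w ∧ G.Adj w y ∧ ¬ G.Adj x y ∧ x ≠ y ∧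
      G.Reachable u x ∧ G.Reachable u w ∧ G.Reachable u y := by
  induction p with
  | nil => exact absurd rfl hne
  | @cons u w v h q ih =>
    by_cases hwv : G.Adj w v
    · have hwv' : w ≠ v := hwv.ne
      exact ⟨u, w, v, h, hwv, hna, hne, Reachable.refl u, h.reachable,
        h.reachable.trans hwv.reachable⟩
    · rcases eq_or_ne w v with rfl | hwvne
      · exact absurd h hna
      · obtain ⟨x, w', y, h1, h2, h3, h4, r1, r2, r3⟩ := ih hwvne hwv
        exact ⟨x, w', y, h1, h2, h3, h4, h.reachable.trans r1, h.reachable.trans r2,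
          h.reachable.trans r3⟩

lemma nr_trans {x y x' y' : V} (h : ¬ G.Reachable x y) (hx : G.Reachable x x')
    (hy : G.Reachable y y') : ¬ G.Reachable x' y' :=
  fun h' => h (hx.trans (h'.trans hy.symm))

lemma nr_ne {x y : V} (h : ¬ G.Reachable x y) : x ≠ y := fun e => h (e ▸ Reachable.refl x)

lemma nr_nadj {x y : V} (h : ¬ G.Reachable x y) : ¬ G.Adj x y := fun e => h e.reachable

lemma induce_reachable_connected (a : V) :
    (G.induce {v | G.Reachable a v}).Connected := by
  rw [SimpleGraph.connected_iff]
  constructor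
  · have key : ∀ {x y : V} (_ : G.Walk x y) (hx : G.Reachable a x) (hy : G.Reachable a y),
        (G.induce {v | G.Reachable a v}).Reachable ⟨x, hx⟩ ⟨y, hy⟩ := by
      intro x y p
      induction p with
      | nil => intro hx hy; rfl
      | @cons x w y h q ih =>
        intro hx hy
        have hw : G.Reachable a w := hx.trans h.reachable
        have : (G.induce {v | G.Reachable a v}).Adj ⟨x, hx⟩ ⟨w, hw⟩ := h
        exact this.reachable.trans (ih hw hy)
    intro x y
    obtain ⟨p⟩ := (x.2 : G.Reachable a x.1).symm.trans (y.2 : G.Reachable a y.1)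
    exact key p x.2 y.2
  · exact ⟨⟨a, Reachable.refl a⟩⟩

end Helpers

section Helpers2
variable {V : Type*} {G : SimpleGraph V}

lemma comp_clique (hP3K2 : GraphFree G graphP3K2) {a c d : V} (hcd : G.Adj c d)
    (hac : ¬ G.Reachable a c) {u v : V} (hu : G.Reachable a u) (hv : G.Reachable a v)
    (hne : u ≠ v) : G.Adj u v := by
  by_contra hna
  obtain ⟨p⟩ := hu.symm.trans hv
  obtain ⟨x, w, y, h1, h2, h3, h4, r1, r2, r3⟩ := exists_induced_P3 p hne hna
  have rax : G.Reachable a x := hu.trans r1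
  have raw : G.Reachable a w := hu.trans r2
  have ray : G.Reachable a y := hu.trans r3
  have had : ¬ G.Reachable a d := nr_trans hac (Reachable.refl a) hcd.reachable
  have Rxc := nr_trans hac rax (Reachable.refl c)
  have Rxd := nr_trans had rax (Reachable.refl d)
  have Rwc := nr_trans hac raw (Reachable.refl c)
  have Rwd := nr_trans had raw (Reachable.refl d)
  have Ryc := nr_trans hac ray (Reachable.refl c)
  have Ryd := nr_trans had ray (Reachable.refl d)
  have nxc := nr_nadj Rxc; have nxd := nr_nadj Rxd
  have nwc := nr_nadj Rwc; have nwd := nr_nadj Rwd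
  have nyc := nr_nadj Ryc; have nyd := nr_nadj Ryd
  have ncx : ¬ G.Adj c x := fun h => nxc h.symm
  have ndx : ¬ G.Adj d x := fun h => nxd h.symm
  have ncw : ¬ G.Adj c w := fun h => nwc h.symm
  have ndw : ¬ G.Adj d w := fun h => nwd h.symm
  have ncy : ¬ G.Adj c y := fun h => nyc h.symm
  have ndy : ¬ G.Adj d y := fun h => nyd h.symm
  have h3' : ¬ G.Adj y x := fun h => h3 h.symm
  have h1' := h1.symm; have h2' := h2.symm; have hdc := hcd.symm
  have exc := nr_ne Rxc; have exd := nr_ne Rxd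
  have ewc := nr_ne Rwc; have ewd := nr_ne Rwd
  have eyc := nr_ne Ryc; have eyd := nr_ne Ryd
  have ecx := exc.symm; have edx := exd.symm
  have ecw := ewc.symm; have edw := ewd.symm
  have ecy := eyc.symm; have edy := eyd.symm
  have nxw : x ≠ w := h1.ne; have nwx : w ≠ x := h1.ne'
  have nwy : w ≠ y := h2.ne; have nyw : y ≠ w := h2.ne'
  have nyx : y ≠ x := h4.symm
  have ncd : c ≠ d := hcd.ne; have ndc : d ≠ c := hcd.ne'
  refine not_free_of_map (![x, w, y, c, d]) ?_ ?_ hP3K2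
  · intro i j hij
    fin_cases i <;> fin_cases j <;>
      simp only [Matrix.cons_val_zero, Matrix.cons_val_one, Matrix.head_cons,
        Matrix.cons_val_two, Matrix.tail_cons, Matrix.cons_val_three,
        Matrix.cons_val_four, Matrix.cons_val_succ] at hij <;>
      first
        | rfl
        | exact absurd hij (by assumption)
  · intro i j
    fin_cases i <;> fin_cases j <;>
      simp [graphP3K2, SimpleGraph.fromRel_adj] <;> assumption
end Helpers2

theorem stmt_12 {V : Type*} [Fintype V] [Nonempty V] (G : SimpleGraph V)
    (hdisc : ¬ G.Connected)
    (hC4 : GraphFree G cycleC4) (hP4 : GraphFree G pathP4)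
    (hP3K2 : GraphFree G graphP3K2) (h3K2 : GraphFree G graph3K2) :
    (∀ u v : V, ¬ G.Adj u v) ∨
    (∃ A B : Set V, Disjoint A B ∧ A.Nontrivial ∧ B.Nontrivial ∧
      (∀ u ∈ A, ∀ v ∈ A, u ≠ v → G.Adj u v) ∧
      (∀ u ∈ B, ∀ v ∈ B, u ≠ v → G.Adj u v) ∧
      (∀ u v : V, G.Adj u v → (u ∈ A ∧ v ∈ A) ∨ (u ∈ B ∧ v ∈ B))) ∨
    (∃ A : Set V, A.Nontrivial ∧ (G.induce A).Connected ∧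
      (∀ u v : V, G.Adj u v → u ∈ A ∧ v ∈ A) ∧
      GraphFree (G.induce A) cycleC4 ∧ GraphFree (G.induce A) pathP4 ∧
      GraphFree (G.induce A) graphP3K2 ∧ GraphFree (G.induce A) graph3K2) := by
  classical
  by_cases hE : ∀ u v : V, ¬ G.Adj u v
  · exact Or.inl hE
  push_neg at hE
  obtain ⟨a, b, hab⟩ := hE
  by_cases hout : ∃ c d, G.Adj c d ∧ ¬ G.Reachable a c
  · obtain ⟨c, d, hcd, hac⟩ := hout
    refine Or.inr (Or.inl ⟨{v | G.Reachable a v}, {v | G.Reachable c v}, ?_, ?_, ?_, ?_, ?_, ?_⟩)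
    · rw [Set.disjoint_left]
      intro v h1 h2
      exact hac (h1.trans (Reachable.symm h2))
    · exact ⟨a, Reachable.refl a, b, hab.reachable, hab.ne⟩
    · exact ⟨c, Reachable.refl c, d, hcd.reachable, hcd.ne⟩
    · intro u hu v hv hne
      exact comp_clique hP3K2 hcd hac hu hv hne
    · intro u hu v hv hne
      exact comp_clique hP3K2 hab (fun h => hac h.symm) hu hv hne
    · intro u v huv
      by_cases hau : G.Reachable a u
      · exact Or.inl ⟨hau, hau.trans huv.reachable⟩
      by_cases hcu : G.Reachable c u
      · exact Or.inr ⟨hcu, hcu.trans huv.reachable⟩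
      exfalso
      have had : ¬ G.Reachable a d := nr_trans hac (Reachable.refl a) hcd.reachable
      have hbc : ¬ G.Reachable b c := nr_trans hac hab.reachable (Reachable.refl c)
      have hbd : ¬ G.Reachable b d := nr_trans had hab.reachable (Reachable.refl d)
      have hav : ¬ G.Reachable a v := nr_trans hau (Reachable.refl a) huv.reachable
      have hbu : ¬ G.Reachable b u := nr_trans hau hab.reachable (Reachable.refl u)
      have hbv : ¬ G.Reachable b v := nr_trans hav hab.reachable (Reachable.refl v)
      have hcv : ¬ G.Reachable c v := nr_trans hcu (Reachable.refl c) huv.reachable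
      have hdu : ¬ G.Reachable d u := nr_trans hcu hcd.reachable (Reachable.refl u)
      have hdv : ¬ G.Reachable d v := nr_trans hcv hcd.reachable (Reachable.refl v)
      have huc : ¬ G.Reachable u c := fun h => hcu h.symm
      have hud : ¬ G.Reachable u d := fun h => hdu h.symm
      have hvc : ¬ G.Reachable v c := fun h => hcv h.symm
      have hvd : ¬ G.Reachable v d := fun h => hdv h.symm
      have hca : ¬ G.Reachable c a := fun h => hac h.symm
      have hcb : ¬ G.Reachable c b := fun h => hbc h.symm
      have hda : ¬ G.Reachable d a := fun h => had h.symm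
      have hdb : ¬ G.Reachable d b := fun h => hbd h.symm
      have hua : ¬ G.Reachable u a := fun h => hau h.symm
      have hub : ¬ G.Reachable u b := fun h => hbu h.symm
      have hva : ¬ G.Reachable v a := fun h => hav h.symm
      have hvb : ¬ G.Reachable v b := fun h => hbv h.symm
      have eab : a ≠ b := hab.ne; have eba : b ≠ a := hab.ne'
      have ecd : c ≠ d := hcd.ne; have edc : d ≠ c := hcd.ne'
      have euv : u ≠ v := huv.ne; have evu : v ≠ u := huv.ne'
      have eac := nr_ne hac; have ead := nr_ne had
      have ebc := nr_ne hbc; have ebd := nr_ne hbd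
      have eau := nr_ne hau; have eav := nr_ne hav
      have ebu := nr_ne hbu; have ebv := nr_ne hbv
      have ecu := nr_ne hcu; have ecv := nr_ne hcv
      have edu := nr_ne hdu; have edv := nr_ne hdv
      have eca := nr_ne hca; have eda := nr_ne hda
      have ecb := nr_ne hcb; have edb := nr_ne hdb
      have eua := nr_ne hua; have eva := nr_ne hva
      have eub := nr_ne hub; have evb := nr_ne hvb
      have euc := nr_ne huc; have evc := nr_ne hvc
      have eud := nr_ne hud; have evd := nr_ne hvd
      have nac := nr_nadj hac; have nad := nr_nadj had
      have nbc := nr_nadj hbc; have nbd := nr_nadj hbd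
      have nau := nr_nadj hau; have nav := nr_nadj hav
      have nbu := nr_nadj hbu; have nbv := nr_nadj hbv
      have ncu := nr_nadj hcu; have ncv := nr_nadj hcv
      have ndu := nr_nadj hdu; have ndv := nr_nadj hdv
      have nca := nr_nadj hca; have nda := nr_nadj hda
      have ncb := nr_nadj hcb; have ndb := nr_nadj hdb
      have nua := nr_nadj hua; have nva := nr_nadj hva
      have nub := nr_nadj hub; have nvb := nr_nadj hvb
      have nuc := nr_nadj huc; have nvc := nr_nadj hvc
      have nud := nr_nadj hud; have nvd := nr_nadj hvd
      have hba := hab.symm; have hdc := hcd.symm; have hvu := huv.symm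
      refine not_free_of_map (![a, b, c, d, u, v]) ?_ ?_ h3K2
      · intro i j hij
        fin_cases i <;> fin_cases j <;>
          simp only [Matrix.cons_val_zero, Matrix.cons_val_one, Matrix.head_cons,
            Matrix.cons_val_two, Matrix.tail_cons, Matrix.cons_val_three,
            Matrix.cons_val_four, Matrix.cons_val_succ] at hij <;>
          first
            | rfl
            | exact absurd hij (by assumption)
      · intro i j
        fin_cases i <;> fin_cases j <;>
          simp [graph3K2, SimpleGraph.fromRel_adj] <;> assumption
  · push_neg at hout
    refine Or.inr (Or.inr ⟨{v | G.Reachable a v}, ?_, induce_reachable_connected a, ?_, ?_, ?_, ?_, ?_⟩)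
    · exact ⟨a, Reachable.refl a, b, hab.reachable, hab.ne⟩
    · intro u v huv
      have hu := hout u v huv
      exact ⟨hu, hu.trans huv.reachable⟩
    · exact free_induce _ hC4
    · exact free_induce _ hP4
    · exact free_induce _ hP3K2
    · exact free_induce _ h3K2
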